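/- Let H_P = (ℤ × ℤ/2) ⋊ ℤ/2 (with ℤ/2 acting by inversion on ℤ), H_M = S₃ × ℤ/2, and H_E = ℤ/2 × ℤ/2, with embeddings of H_E into H_P and H_M sending the two generators to the images of a and c as in the presentations above. Then the amalgamated free product H_P ∗_{H_E} H_M has presentation ⟨a, b, c, d | a² = c² = d³ = (ac)² = adad⁻¹ = abab⁻¹ = 1, cbc = ab, d = cd²c⟩. -/

import Mathlib

/-- Relators of `H_P = ⟨a,b,c | a² = c² = (ac)² = abab⁻¹ = 1, cbc = ab⟩`
(generators `0 = a`, `1 = b`, `2 = c`); `H_P ≅ (ℤ × ℤ/2) ⋊ ℤ/2`. -/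
def relsHP : Set (FreeGroup (Fin 3)) :=
  { (FreeGroup.of 0) ^ 2,
    (FreeGroup.of 2) ^ 2,
    (FreeGroup.of 0 * FreeGroup.of 2) ^ 2,
    FreeGroup.of 0 * FreeGroup.of 1 * FreeGroup.of 0 * (FreeGroup.of 1)⁻¹,
    (FreeGroup.of 2 * FreeGroup.of 1 * FreeGroup.of 2) * (FreeGroup.of 0 * FreeGroup.of 1)⁻¹ }

/-- Relators of `H_M = ⟨d,a,c | d³ = a² = c² = (ac)² = 1, ad = da, d = cd²c⟩`
(generators `0 = d`, `1 = a`, `2 = c`); `H_M ≅ S₃ × ℤ/2`. -/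
def relsHM : Set (FreeGroup (Fin 3)) :=
  { (FreeGroup.of 0) ^ 3,
    (FreeGroup.of 1) ^ 2,
    (FreeGroup.of 2) ^ 2,
    (FreeGroup.of 1 * FreeGroup.of 2) ^ 2,
    FreeGroup.of 1 * FreeGroup.of 0 * (FreeGroup.of 1)⁻¹ * (FreeGroup.of 0)⁻¹,
    (FreeGroup.of 0)⁻¹ * (FreeGroup.of 2 * (FreeGroup.of 0) ^ 2 * FreeGroup.of 2) }

/-- Relators of `H_E = ⟨a,c | a² = c² = (ac)² = 1⟩ ≅ ℤ/2 × ℤ/2`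
(generators `0 = a`, `1 = c`). -/
def relsHE : Set (FreeGroup (Fin 2)) :=
  { (FreeGroup.of 0) ^ 2,
    (FreeGroup.of 1) ^ 2,
    (FreeGroup.of 0 * FreeGroup.of 1) ^ 2 }

/-- Relators of `G = ⟨a,b,c,d | a² = c² = d³ = (ac)² = adad⁻¹ = abab⁻¹ = 1,
cbc = ab, d = cd²c⟩` (generators `0 = a`, `1 = b`, `2 = c`, `3 = d`). -/
def relsG : Set (FreeGroup (Fin 4)) :=
  { (FreeGroup.of 0) ^ 2,
    (FreeGroup.of 2) ^ 2,
    (FreeGroup.of 3) ^ 3,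
    (FreeGroup.of 0 * FreeGroup.of 2) ^ 2,
    FreeGroup.of 0 * FreeGroup.of 3 * FreeGroup.of 0 * (FreeGroup.of 3)⁻¹,
    FreeGroup.of 0 * FreeGroup.of 1 * FreeGroup.of 0 * (FreeGroup.of 1)⁻¹,
    (FreeGroup.of 2 * FreeGroup.of 1 * FreeGroup.of 2) * (FreeGroup.of 0 * FreeGroup.of 1)⁻¹,
    (FreeGroup.of 3)⁻¹ * (FreeGroup.of 2 * (FreeGroup.of 3) ^ 2 * FreeGroup.of 2) }

/-- The family of vertex groups, indexed by `Bool`: `true ↦ H_P`, `false ↦ H_M`. -/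
def vertexGroup : Bool → Type :=
  fun b => match b with
  | true => PresentedGroup relsHP
  | false => PresentedGroup relsHM

instance : ∀ b, Group (vertexGroup b) := fun b => by
  cases b <;> exact inferInstanceAs (Group (PresentedGroup _))

namespace Stmt6Aux

open PresentedGroup

lemma mk_rel_one {α : Type*} {rels : Set (FreeGroup α)} {r : FreeGroup α} (h : r ∈ rels) :
    PresentedGroup.mk rels r = 1 :=
  (QuotientGroup.eq_one_iff r).2 (Subgroup.subset_normalClosure h)

-- relations in H_P
lemma Pa2 : (of 0 : PresentedGroup relsHP) ^ 2 = 1 := by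
  have h := mk_rel_one (rels := relsHP) (r := (FreeGroup.of 0) ^ 2) (by simp [relsHP])
  rwa [map_pow] at h

lemma Pc2 : (of 2 : PresentedGroup relsHP) ^ 2 = 1 := by
  have h := mk_rel_one (rels := relsHP) (r := (FreeGroup.of 2) ^ 2) (by simp [relsHP])
  rwa [map_pow] at h

lemma Pac2 : ((of 0 : PresentedGroup relsHP) * of 2) ^ 2 = 1 := by
  have h := mk_rel_one (rels := relsHP) (r := (FreeGroup.of 0 * FreeGroup.of 2) ^ 2)
    (by simp [relsHP])
  rwa [map_pow, map_mul] at h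

lemma Pab : (of 0 : PresentedGroup relsHP) * of 1 * of 0 * (of 1)⁻¹ = 1 := by
  have h := mk_rel_one (rels := relsHP)
    (r := FreeGroup.of 0 * FreeGroup.of 1 * FreeGroup.of 0 * (FreeGroup.of 1)⁻¹)
    (by simp [relsHP])
  rwa [map_mul, map_mul, map_mul, map_inv] at h

lemma Pcbc : ((of 2 : PresentedGroup relsHP) * of 1 * of 2) * ((of 0 : PresentedGroup relsHP) * of 1)⁻¹ = 1 := by
  have h := mk_rel_one (rels := relsHP)
    (r := (FreeGroup.of 2 * FreeGroup.of 1 * FreeGroup.of 2) * (FreeGroup.of 0 * FreeGroup.of 1)⁻¹)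
    (by simp [relsHP])
  rwa [map_mul, map_mul, map_mul, map_inv, map_mul] at h

-- relations in H_M
lemma Md3 : (of 0 : PresentedGroup relsHM) ^ 3 = 1 := by
  have h := mk_rel_one (rels := relsHM) (r := (FreeGroup.of 0) ^ 3) (by simp [relsHM])
  rwa [map_pow] at h

lemma Ma2 : (of 1 : PresentedGroup relsHM) ^ 2 = 1 := by
  have h := mk_rel_one (rels := relsHM) (r := (FreeGroup.of 1) ^ 2) (by simp [relsHM])
  rwa [map_pow] at h

lemma Mc2 : (of 2 : PresentedGroup relsHM) ^ 2 = 1 := by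
  have h := mk_rel_one (rels := relsHM) (r := (FreeGroup.of 2) ^ 2) (by simp [relsHM])
  rwa [map_pow] at h

lemma Mac2 : ((of 1 : PresentedGroup relsHM) * of 2) ^ 2 = 1 := by
  have h := mk_rel_one (rels := relsHM) (r := (FreeGroup.of 1 * FreeGroup.of 2) ^ 2)
    (by simp [relsHM])
  rwa [map_pow, map_mul] at h

lemma Mad : (of 1 : PresentedGroup relsHM) * of 0 * (of 1)⁻¹ * (of 0)⁻¹ = 1 := by
  have h := mk_rel_one (rels := relsHM)
    (r := FreeGroup.of 1 * FreeGroup.of 0 * (FreeGroup.of 1)⁻¹ * (FreeGroup.of 0)⁻¹)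
    (by simp [relsHM])
  rwa [map_mul, map_mul, map_mul, map_inv, map_inv] at h

lemma Mdc : ((of 0 : PresentedGroup relsHM))⁻¹ * (of 2 * (of 0) ^ 2 * of 2) = 1 := by
  have h := mk_rel_one (rels := relsHM)
    (r := (FreeGroup.of 0)⁻¹ * (FreeGroup.of 2 * (FreeGroup.of 0) ^ 2 * FreeGroup.of 2))
    (by simp [relsHM])
  rwa [map_mul, map_mul, map_mul, map_inv, map_pow] at h

lemma Mad' : (of 1 : PresentedGroup relsHM) * of 0 * of 1 * (of 0)⁻¹ = 1 := by
  have h1 : ((of 1 : PresentedGroup relsHM))⁻¹ = of 1 :=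
    inv_eq_of_mul_eq_one_right (by rw [← sq]; exact Ma2)
  calc (of 1 : PresentedGroup relsHM) * of 0 * of 1 * (of 0)⁻¹
      = of 1 * of 0 * (of 1)⁻¹ * (of 0)⁻¹ := by rw [h1]
    _ = 1 := Mad

-- relations in G
lemma Ga2 : (of 0 : PresentedGroup relsG) ^ 2 = 1 := by
  have h := mk_rel_one (rels := relsG) (r := (FreeGroup.of 0) ^ 2) (by simp [relsG])
  rwa [map_pow] at h

lemma Gc2 : (of 2 : PresentedGroup relsG) ^ 2 = 1 := by
  have h := mk_rel_one (rels := relsG) (r := (FreeGroup.of 2) ^ 2) (by simp [relsG])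
  rwa [map_pow] at h

lemma Gd3 : (of 3 : PresentedGroup relsG) ^ 3 = 1 := by
  have h := mk_rel_one (rels := relsG) (r := (FreeGroup.of 3) ^ 3) (by simp [relsG])
  rwa [map_pow] at h

lemma Gac2 : ((of 0 : PresentedGroup relsG) * of 2) ^ 2 = 1 := by
  have h := mk_rel_one (rels := relsG) (r := (FreeGroup.of 0 * FreeGroup.of 2) ^ 2)
    (by simp [relsG])
  rwa [map_pow, map_mul] at h

lemma Gad : (of 0 : PresentedGroup relsG) * of 3 * of 0 * (of 3)⁻¹ = 1 := by
  have h := mk_rel_one (rels := relsG)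
    (r := FreeGroup.of 0 * FreeGroup.of 3 * FreeGroup.of 0 * (FreeGroup.of 3)⁻¹)
    (by simp [relsG])
  rwa [map_mul, map_mul, map_mul, map_inv] at h

lemma Gab : (of 0 : PresentedGroup relsG) * of 1 * of 0 * (of 1)⁻¹ = 1 := by
  have h := mk_rel_one (rels := relsG)
    (r := FreeGroup.of 0 * FreeGroup.of 1 * FreeGroup.of 0 * (FreeGroup.of 1)⁻¹)
    (by simp [relsG])
  rwa [map_mul, map_mul, map_mul, map_inv] at h

lemma Gcbc : ((of 2 : PresentedGroup relsG) * of 1 * of 2) * ((of 0 : PresentedGroup relsG) * of 1)⁻¹ = 1 := by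
  have h := mk_rel_one (rels := relsG)
    (r := (FreeGroup.of 2 * FreeGroup.of 1 * FreeGroup.of 2) * (FreeGroup.of 0 * FreeGroup.of 1)⁻¹)
    (by simp [relsG])
  rwa [map_mul, map_mul, map_mul, map_inv, map_mul] at h

lemma Gdc : ((of 3 : PresentedGroup relsG))⁻¹ * (of 2 * (of 3) ^ 2 * of 2) = 1 := by
  have h := mk_rel_one (rels := relsG)
    (r := (FreeGroup.of 3)⁻¹ * (FreeGroup.of 2 * (FreeGroup.of 3) ^ 2 * FreeGroup.of 2))
    (by simp [relsG])
  rwa [map_mul, map_mul, map_mul, map_inv, map_pow] at h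

lemma Gad' : (of 0 : PresentedGroup relsG) * of 3 * (of 0)⁻¹ * (of 3)⁻¹ = 1 := by
  have h1 : ((of 0 : PresentedGroup relsG))⁻¹ = of 0 :=
    inv_eq_of_mul_eq_one_right (by rw [← sq]; exact Ga2)
  rw [h1]; exact Gad

/-- The map `H_E → H_P`. -/
def φP : PresentedGroup relsHE →* PresentedGroup relsHP :=
  toGroup (f := ![of 0, of 2]) (by
    intro r hr
    simp only [relsHE, Set.mem_insert_iff, Set.mem_singleton_iff] at hr
    rcases hr with rfl | rfl | rfl <;>
      simp only [map_pow, map_mul, FreeGroup.lift_apply_of, Matrix.cons_val_zero, Matrix.cons_val_one,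
        Matrix.head_cons]
    · exact Pa2
    · exact Pc2
    · exact Pac2)

/-- The map `H_E → H_M`. -/
def φM : PresentedGroup relsHE →* PresentedGroup relsHM :=
  toGroup (f := ![of 1, of 2]) (by
    intro r hr
    simp only [relsHE, Set.mem_insert_iff, Set.mem_singleton_iff] at hr
    rcases hr with rfl | rfl | rfl <;>
      simp only [map_pow, map_mul, FreeGroup.lift_apply_of, Matrix.cons_val_zero, Matrix.cons_val_one,
        Matrix.head_cons]
    · exact Ma2
    · exact Mc2
    · exact Mac2)

/-- The family of edge maps. -/
def φfam : ∀ b : Bool, PresentedGroup relsHE →* vertexGroup b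
  | true => φP
  | false => φM

/-- `H_P → G`. -/
def gP : PresentedGroup relsHP →* PresentedGroup relsG :=
  toGroup (f := ![of 0, of 1, of 2]) (by
    intro r hr
    simp only [relsHP, Set.mem_insert_iff, Set.mem_singleton_iff] at hr
    rcases hr with rfl | rfl | rfl | rfl | rfl <;>
      simp only [map_pow, map_mul, map_inv, FreeGroup.lift_apply_of, Matrix.cons_val_zero,
        Matrix.cons_val_one, Matrix.head_cons, Matrix.cons_val_two, Matrix.tail_cons]
    · exact Ga2
    · exact Gc2
    · exact Gac2
    · exact Gab
    · exact Gcbc)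

/-- `H_M → G`. -/
def gM : PresentedGroup relsHM →* PresentedGroup relsG :=
  toGroup (f := ![of 3, of 0, of 2]) (by
    intro r hr
    simp only [relsHM, Set.mem_insert_iff, Set.mem_singleton_iff] at hr
    rcases hr with rfl | rfl | rfl | rfl | rfl | rfl <;>
      simp only [map_pow, map_mul, map_inv, FreeGroup.lift_apply_of, Matrix.cons_val_zero,
        Matrix.cons_val_one, Matrix.head_cons, Matrix.cons_val_two, Matrix.tail_cons]
    · exact Gd3
    · exact Ga2
    · exact Gc2
    · exact Gac2
    · exact Gad'
    · exact Gdc)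

/-- `H_E → G`. -/
def kE : PresentedGroup relsHE →* PresentedGroup relsG :=
  toGroup (f := ![of 0, of 2]) (by
    intro r hr
    simp only [relsHE, Set.mem_insert_iff, Set.mem_singleton_iff] at hr
    rcases hr with rfl | rfl | rfl <;>
      simp only [map_pow, map_mul, FreeGroup.lift_apply_of, Matrix.cons_val_zero, Matrix.cons_val_one,
        Matrix.head_cons]
    · exact Ga2
    · exact Gc2
    · exact Gac2)

/-- The family of vertex maps. -/
def gfam : ∀ b : Bool, vertexGroup b →* PresentedGroup relsG
  | true => gP
  | false => gM

lemma φP0 : φP (of 0) = (of 0 : PresentedGroup relsHP) := by simp [φP, toGroup.of]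
lemma φP1 : φP (of 1) = (of 2 : PresentedGroup relsHP) := by simp [φP, toGroup.of]
lemma φM0 : φM (of 0) = (of 1 : PresentedGroup relsHM) := by simp [φM, toGroup.of]
lemma φM1 : φM (of 1) = (of 2 : PresentedGroup relsHM) := by simp [φM, toGroup.of]
lemma gP0 : gP (of 0) = (of 0 : PresentedGroup relsG) := by simp [gP, toGroup.of]
lemma gP1 : gP (of 1) = (of 1 : PresentedGroup relsG) := by simp [gP, toGroup.of]
lemma gP2 : gP (of 2) = (of 2 : PresentedGroup relsG) := by simp [gP, toGroup.of]
lemma gM0 : gM (of 0) = (of 3 : PresentedGroup relsG) := by simp [gM, toGroup.of]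
lemma gM1 : gM (of 1) = (of 0 : PresentedGroup relsG) := by simp [gM, toGroup.of]
lemma gM2 : gM (of 2) = (of 2 : PresentedGroup relsG) := by simp [gM, toGroup.of]
lemma kE0 : kE (of 0) = (of 0 : PresentedGroup relsG) := by simp [kE, toGroup.of]
lemma kE1 : kE (of 1) = (of 2 : PresentedGroup relsG) := by simp [kE, toGroup.of]

lemma hcomp : ∀ i, (gfam i).comp (φfam i) = kE := by
  intro i
  cases i
  · refine PresentedGroup.ext fun x => ?_
    fin_cases x
    · show gM (φM (of 0)) = kE (of 0)
      rw [φM0, gM1, kE0]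
    · show gM (φM (of 1)) = kE (of 1)
      rw [φM1, gM2, kE1]
  · refine PresentedGroup.ext fun x => ?_
    fin_cases x
    · show gP (φP (of 0)) = kE (of 0)
      rw [φP0, gP0, kE0]
    · show gP (φP (of 1)) = kE (of 1)
      rw [φP1, gP2, kE1]

lemma hA : (Monoid.PushoutI.of (φ := φfam) true) (of 0 : PresentedGroup relsHP) =
    (Monoid.PushoutI.of (φ := φfam) false) (of 1 : PresentedGroup relsHM) := by
  have h1 := Monoid.PushoutI.of_apply_eq_base φfam true (of 0 : PresentedGroup relsHE)
  have h2 := Monoid.PushoutI.of_apply_eq_base φfam false (of 0 : PresentedGroup relsHE)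
  have e1 : φfam true (of 0 : PresentedGroup relsHE) = (of 0 : PresentedGroup relsHP) := φP0
  have e2 : φfam false (of 0 : PresentedGroup relsHE) = (of 1 : PresentedGroup relsHM) := φM0
  rw [e1] at h1; rw [e2] at h2
  exact h1.trans h2.symm

lemma hC : (Monoid.PushoutI.of (φ := φfam) true) (of 2 : PresentedGroup relsHP) =
    (Monoid.PushoutI.of (φ := φfam) false) (of 2 : PresentedGroup relsHM) := by
  have h1 := Monoid.PushoutI.of_apply_eq_base φfam true (of 1 : PresentedGroup relsHE)
  have h2 := Monoid.PushoutI.of_apply_eq_base φfam false (of 1 : PresentedGroup relsHE)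
  have e1 : φfam true (of 1 : PresentedGroup relsHE) = (of 2 : PresentedGroup relsHP) := φP1
  have e2 : φfam false (of 1 : PresentedGroup relsHE) = (of 2 : PresentedGroup relsHM) := φM1
  rw [e1] at h1; rw [e2] at h2
  exact h1.trans h2.symm

/-- `G → pushout`. -/
def fG : PresentedGroup relsG →* Monoid.PushoutI φfam :=
  toGroup (f := ![Monoid.PushoutI.of (φ := φfam) true (of 0 : PresentedGroup relsHP),
                  Monoid.PushoutI.of (φ := φfam) true (of 1 : PresentedGroup relsHP),
                  Monoid.PushoutI.of (φ := φfam) true (of 2 : PresentedGroup relsHP),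
                  Monoid.PushoutI.of (φ := φfam) false (of 0 : PresentedGroup relsHM)]) (by
    intro r hr
    simp only [relsG, Set.mem_insert_iff, Set.mem_singleton_iff] at hr
    rcases hr with rfl | rfl | rfl | rfl | rfl | rfl | rfl | rfl <;>
      simp only [map_pow, map_mul, map_inv, FreeGroup.lift_apply_of, Matrix.cons_val_zero,
        Matrix.cons_val_one, Matrix.head_cons, Matrix.cons_val_two, Matrix.tail_cons,
        Matrix.cons_val_three]
    · erw [← map_pow, Pa2, map_one]
    · erw [← map_pow, Pc2, map_one]
    · erw [← map_pow, Md3, map_one]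
    · erw [← map_mul, ← map_pow, Pac2, map_one]
    · erw [hA, ← map_inv, ← map_mul, ← map_mul, ← map_mul, Mad', map_one]
    · erw [← map_inv, ← map_mul, ← map_mul, ← map_mul, Pab, map_one]
    · erw [← map_mul (Monoid.PushoutI.of (φ := φfam) true) (of 0 : PresentedGroup relsHP) (of 1),
        ← map_inv (Monoid.PushoutI.of (φ := φfam) true), ← map_mul (Monoid.PushoutI.of (φ := φfam) true),
        ← map_mul (Monoid.PushoutI.of (φ := φfam) true), ← map_mul (Monoid.PushoutI.of (φ := φfam) true), Pcbc, map_one]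
    · erw [hC, ← map_pow, ← map_mul, ← map_mul, ← map_inv, ← map_mul, Mdc, map_one])

lemma fG0 : fG (of 0) = (Monoid.PushoutI.of (φ := φfam) true) (of 0 : PresentedGroup relsHP) := by
  simp [fG, toGroup.of]
lemma fG1 : fG (of 1) = (Monoid.PushoutI.of (φ := φfam) true) (of 1 : PresentedGroup relsHP) := by
  simp [fG, toGroup.of]
lemma fG2 : fG (of 2) = (Monoid.PushoutI.of (φ := φfam) true) (of 2 : PresentedGroup relsHP) := by
  simp [fG, toGroup.of]
lemma fG3 : fG (of 3) = (Monoid.PushoutI.of (φ := φfam) false) (of 0 : PresentedGroup relsHM) := by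
  simp [fG, toGroup.of]

end Stmt6Aux

/-- The amalgamated free product `H_P ∗_{H_E} H_M`, where the maps `H_E → H_P` and
`H_E → H_M` send the generators `a`, `c` of `H_E` to the generators named `a`, `c`
of `H_P` and of `H_M`, has the presentation
`⟨a,b,c,d | a² = c² = d³ = (ac)² = adad⁻¹ = abab⁻¹ = 1, cbc = ab, d = cd²c⟩`. -/
theorem stmt6 :
    ∃ φ : ∀ b : Bool, PresentedGroup relsHE →* vertexGroup b,
      φ true (PresentedGroup.of 0) = (PresentedGroup.of 0 : PresentedGroup relsHP) ∧
      φ true (PresentedGroup.of 1) = (PresentedGroup.of 2 : PresentedGroup relsHP) ∧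
      φ false (PresentedGroup.of 0) = (PresentedGroup.of 1 : PresentedGroup relsHM) ∧
      φ false (PresentedGroup.of 1) = (PresentedGroup.of 2 : PresentedGroup relsHM) ∧
      Nonempty (PresentedGroup relsG ≃* Monoid.PushoutI φ) := by
  classical
  open Stmt6Aux PresentedGroup in
  refine ⟨φfam, φP0, φP1, φM0, φM1, ?_⟩
  refine ⟨MonoidHom.toMulEquiv fG (Monoid.PushoutI.lift gfam kE hcomp) ?_ ?_⟩
  · refine PresentedGroup.ext fun x => ?_
    fin_cases x
    · show (Monoid.PushoutI.lift gfam kE hcomp) (fG (of 0)) = of 0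
      erw [fG0, Monoid.PushoutI.lift_of]
      exact gP0
    · show (Monoid.PushoutI.lift gfam kE hcomp) (fG (of 1)) = of 1
      erw [fG1, Monoid.PushoutI.lift_of]
      exact gP1
    · show (Monoid.PushoutI.lift gfam kE hcomp) (fG (of 2)) = of 2
      erw [fG2, Monoid.PushoutI.lift_of]
      exact gP2
    · show (Monoid.PushoutI.lift gfam kE hcomp) (fG (of 3)) = of 3
      erw [fG3, Monoid.PushoutI.lift_of]
      exact gM0
  · refine Monoid.PushoutI.hom_ext_nonempty fun i => ?_
    cases i
    · refine PresentedGroup.ext fun x => ?_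
      fin_cases x
      · show fG ((Monoid.PushoutI.lift gfam kE hcomp)
            ((Monoid.PushoutI.of (φ := φfam) false) (of 0 : PresentedGroup relsHM))) =
          (Monoid.PushoutI.of (φ := φfam) false) (of 0 : PresentedGroup relsHM)
        erw [Monoid.PushoutI.lift_of]
        show fG (gM (of 0)) = _
        rw [gM0, fG3]
      · show fG ((Monoid.PushoutI.lift gfam kE hcomp)
            ((Monoid.PushoutI.of (φ := φfam) false) (of 1 : PresentedGroup relsHM))) =
          (Monoid.PushoutI.of (φ := φfam) false) (of 1 : PresentedGroup relsHM)
        erw [Monoid.PushoutI.lift_of]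
        show fG (gM (of 1)) = _
        rw [gM1, fG0]
        exact hA
      · show fG ((Monoid.PushoutI.lift gfam kE hcomp)
            ((Monoid.PushoutI.of (φ := φfam) false) (of 2 : PresentedGroup relsHM))) =
          (Monoid.PushoutI.of (φ := φfam) false) (of 2 : PresentedGroup relsHM)
        erw [Monoid.PushoutI.lift_of]
        show fG (gM (of 2)) = _
        rw [gM2, fG2]
        exact hC
    · refine PresentedGroup.ext fun x => ?_
      fin_cases x
      · show fG ((Monoid.PushoutI.lift gfam kE hcomp)
            ((Monoid.PushoutI.of (φ := φfam) true) (of 0 : PresentedGroup relsHP))) =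
          (Monoid.PushoutI.of (φ := φfam) true) (of 0 : PresentedGroup relsHP)
        erw [Monoid.PushoutI.lift_of]
        show fG (gP (of 0)) = _
        rw [gP0, fG0]
      · show fG ((Monoid.PushoutI.lift gfam kE hcomp)
            ((Monoid.PushoutI.of (φ := φfam) true) (of 1 : PresentedGroup relsHP))) =
          (Monoid.PushoutI.of (φ := φfam) true) (of 1 : PresentedGroup relsHP)
        erw [Monoid.PushoutI.lift_of]
        show fG (gP (of 1)) = _
        rw [gP1, fG1]
      · show fG ((Monoid.PushoutI.lift gfam kE hcomp)
            ((Monoid.PushoutI.of (φ := φfam) true) (of 2 : PresentedGroup relsHP))) =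
          (Monoid.PushoutI.of (φ := φfam) true) (of 2 : PresentedGroup relsHP)
        erw [Monoid.PushoutI.lift_of]
        show fG (gP (of 2)) = _
        rw [gP2, fG2]
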